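/- Let S = {x ∈ ℝⁿ : hᵢ(x) = 0 for i ∈ [m₁], gⱼ(x) ≥ 0 for j ∈ [m₂]} where hᵢ, gⱼ are polynomials, and let S̃₀ = {(x₀,x) ∈ ℝ^{n+1} : hᵢ^hom(x₀,x) = 0, gⱼ^hom(x₀,x) ≥ 0, x₀ > 0}, where f^hom(x₀,x) = x₀^{deg f} f(x/x₀) denotes homogenization. Then for any polynomial f ∈ ℝ[x], f(x) ≥ 0 for all x ∈ S if and only if f^hom(x̃) ≥ 0 for all x̃ in the closure of S̃₀ in ℝ^{n+1}. -/

import Mathlib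

open MvPolynomial

lemma eval_smul_of_isHomogeneous {σ : Type*} [Fintype σ] (φ : MvPolynomial σ ℝ) {d : ℕ}
    (hφ : φ.IsHomogeneous d) (c : ℝ) (x : σ → ℝ) :
    eval (c • x) φ = c ^ d * eval x φ := by
  rw [eval_eq, eval_eq, Finset.mul_sum]
  apply Finset.sum_congr rfl
  intro m hm
  have hdeg : ∑ i ∈ m.support, m i = d := by
    have h1 := hφ (mem_support_iff.mp hm)
    rw [Finsupp.weight_apply, Finsupp.sum] at h1
    simpa using h1
  calc coeff m φ * ∏ i ∈ m.support, (c • x) i ^ m i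
      = coeff m φ * ∏ i ∈ m.support, (c ^ m i * x i ^ m i) := by
        simp [Pi.smul_apply, smul_eq_mul, mul_pow]
    _ = coeff m φ * ((∏ i ∈ m.support, c ^ m i) * ∏ i ∈ m.support, x i ^ m i) := by
        rw [Finset.prod_mul_distrib]
    _ = c ^ d * (coeff m φ * ∏ i ∈ m.support, x i ^ m i) := by
        rw [Finset.prod_pow_eq_pow_sum, hdeg]; ring

/-- `f ≥ 0` on `S` iff `f^hom ≥ 0` on the closure of `S̃₀`.
Homogenizations are characterized by being homogeneous of the right degree and
agreeing with the original polynomial on the slice `x₀ = 1`. -/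
theorem nonneg_on_S_iff_hom_nonneg_on_closure
    (n m₁ m₂ : ℕ)
    (h : Fin m₁ → MvPolynomial (Fin n) ℝ) (g : Fin m₂ → MvPolynomial (Fin n) ℝ)
    (f : MvPolynomial (Fin n) ℝ)
    (Hh : Fin m₁ → MvPolynomial (Fin (n + 1)) ℝ)
    (Hg : Fin m₂ → MvPolynomial (Fin (n + 1)) ℝ)
    (F : MvPolynomial (Fin (n + 1)) ℝ)
    (hHh : ∀ i, (Hh i).IsHomogeneous (h i).totalDegree)
    (hHh1 : ∀ i, ∀ x : Fin n → ℝ, eval (Fin.cons 1 x) (Hh i) = eval x (h i))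
    (hHg : ∀ j, (Hg j).IsHomogeneous (g j).totalDegree)
    (hHg1 : ∀ j, ∀ x : Fin n → ℝ, eval (Fin.cons 1 x) (Hg j) = eval x (g j))
    (hF : F.IsHomogeneous f.totalDegree)
    (hF1 : ∀ x : Fin n → ℝ, eval (Fin.cons 1 x) F = eval x f)
    (S : Set (Fin n → ℝ))
    (hS : S = {x | (∀ i, eval x (h i) = 0) ∧ ∀ j, 0 ≤ eval x (g j)})
    (S0 : Set (Fin (n + 1) → ℝ))
    (hS0 : S0 = {xt | (∀ i, eval xt (Hh i) = 0) ∧ (∀ j, 0 ≤ eval xt (Hg j)) ∧ 0 < xt 0}) :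
    (∀ x ∈ S, 0 ≤ eval x f) ↔ (∀ xt ∈ closure S0, 0 ≤ eval xt F) := by
  constructor
  · intro hf
    -- F ≥ 0 on S0, then pass to closure
    have hF0 : ∀ xt ∈ S0, 0 ≤ eval xt F := by
      intro xt hxt
      rw [hS0] at hxt
      obtain ⟨hh0, hg0, hx0⟩ := hxt
      set c : ℝ := xt 0 with hc
      set x : Fin n → ℝ := fun i => xt i.succ / c with hx
      have hxeq : xt = c • (Fin.cons 1 x : Fin (n+1) → ℝ) := by
        funext i
        refine Fin.cases ?_ ?_ i
        · simp [Fin.cons_zero, hc]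
        · intro j
          simp [hx, Fin.cons_succ, mul_div_cancel₀ _ (ne_of_gt hx0)]
      have hmem : x ∈ S := by
        rw [hS]
        constructor
        · intro i
          have := hh0 i
          rw [hxeq, eval_smul_of_isHomogeneous _ (hHh i), hHh1 i] at this
          have hcpow : (0:ℝ) < c ^ (h i).totalDegree := pow_pos hx0 _
          exact (mul_eq_zero.mp this).resolve_left (ne_of_gt hcpow)
        · intro j
          have := hg0 j
          rw [hxeq, eval_smul_of_isHomogeneous _ (hHg j), hHg1 j] at this
          have hcpow : (0:ℝ) < c ^ (g j).totalDegree := pow_pos hx0 _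
          exact nonneg_of_mul_nonneg_right this hcpow
      have := hf x hmem
      rw [hxeq, eval_smul_of_isHomogeneous _ hF, hF1]
      exact mul_nonneg (le_of_lt (pow_pos hx0 _)) this
    intro xt hxt
    have hcl : closure S0 ⊆ {y | 0 ≤ eval y F} :=
      closure_minimal hF0 (isClosed_le continuous_const (MvPolynomial.continuous_eval F))
    exact hcl hxt
  · intro hF0 x hx
    rw [hS] at hx
    have hmem : Fin.cons 1 x ∈ S0 := by
      rw [hS0]
      refine ⟨fun i => ?_, fun j => ?_, by simp⟩
      · rw [hHh1]; exact hx.1 i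
      · rw [hHg1]; exact hx.2 j
    have := hF0 _ (subset_closure hmem)
    rwa [hF1] at this
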